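/- arXiv:2106.10541 — 4 statements merged into one kernel-verified Lean document; each statement's English description precedes it below -/
import Mathlib

section
/- A word f over an alphabet A is Hamming-isometric if and only if it is not the case that f has a 2-error border, where being Hamming-isometric means: for every n and all f-free words u, v of length n, u can be transformed into v by changing, one at a time, the letters at positions where u and v differ, so that every intermediate word is also f-free. (Formally: a word f is not Hamming-isometric iff f has a 2-error border.) -/
open Finset

/-- The factor `f` occurs in `u` at position `j`. -/
def occursAt {A : Type*} {l n : ℕ} (f : Fin l → A) (u : Fin n → A) (j : ℕ) : Prop :=
  ∃ h : j + l ≤ n, ∀ i : Fin l, u ⟨j + i.1, by have := i.isLt; omega⟩ = f i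

/-- `u` is `f`-free: `f` is not a contiguous factor of `u`. -/
def Free {A : Type*} {l n : ℕ} (f : Fin l → A) (u : Fin n → A) : Prop :=
  ∀ j : ℕ, ¬ occursAt f u j

/-- There is an `f`-free transformation from `u` to `v`: a sequence of words starting at `u`,
ending at `v`, each obtained from the previous by changing one position where it differs
from `v` to the letter of `v`, all words being `f`-free. -/
def FreeTransform {A : Type*} [DecidableEq A] {l n : ℕ} (f : Fin l → A)
    (u v : Fin n → A) : Prop :=
  ∃ w : Fin (hammingDist u v + 1) → Fin n → A,
    w 0 = u ∧ w (Fin.last _) = v ∧ (∀ j, Free f (w j)) ∧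
    ∀ j : Fin (hammingDist u v),
      ∃ p : Fin n, w j.castSucc p ≠ v p ∧ w j.succ = Function.update (w j.castSucc) p (v p)

/-- `f` is Hamming-isometric. -/
def HammingIsometric {A : Type*} [DecidableEq A] {l : ℕ} (f : Fin l → A) : Prop :=
  ∀ (n : ℕ) (u v : Fin n → A), Free f u → Free f v → FreeTransform f u v

/-- `u` has a `k`-error border: a proper prefix and suffix of the same positive length `m`
at Hamming distance exactly `k`. -/
def hasKErrorBorder {A : Type*} [DecidableEq A] {n : ℕ} (u : Fin n → A) (k : ℕ) : Prop :=
  ∃ m : ℕ, 0 < m ∧ ∃ h : m < n,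
    hammingDist (fun i : Fin m => u ⟨i.1, by have := i.isLt; omega⟩)
      (fun i : Fin m => u ⟨n - m + i.1, by have := i.isLt; omega⟩) = k

/-- Lee distance between letters of `ZMod d`. -/
def leeDistL {d : ℕ} [NeZero d] (a b : ZMod d) : ℕ :=
  min (max (a.val - b.val) (b.val - a.val)) (d - max (a.val - b.val) (b.val - a.val))

/-- Lee distance between words of length `n` over `ZMod d`. -/
def leeDist {d n : ℕ} [NeZero d] (u v : Fin n → ZMod d) : ℕ :=
  ∑ i, leeDistL (u i) (v i)

/-- `u` has a `k`-Lee-error border. -/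
def hasKLeeErrorBorder {d n : ℕ} [NeZero d] (u : Fin n → ZMod d) (k : ℕ) : Prop :=
  ∃ m : ℕ, 0 < m ∧ ∃ h : m < n,
    leeDist (fun i : Fin m => u ⟨i.1, by have := i.isLt; omega⟩)
      (fun i : Fin m => u ⟨n - m + i.1, by have := i.isLt; omega⟩) = k

/-- The `d`-ary `n`-cube `Q_n^d`. -/
def QGraph (n d : ℕ) : SimpleGraph (Fin n → ZMod d) where
  Adj u v := ∃ i, u i ≠ v i ∧ (v i = u i + 1 ∨ v i = u i - 1) ∧ ∀ j, j ≠ i → u j = v j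
  symm := by
    constructor
    rintro u v ⟨i, hne, hpm, hrest⟩
    refine ⟨i, hne.symm, ?_, fun j hj => (hrest j hj).symm⟩
    rcases hpm with h | h
    · right; rw [h]; ring
    · left; rw [h]; ring
  loopless := by constructor; rintro u ⟨i, hne, -⟩; exact hne rfl

/-- `f` is Lee-isometric: for all `n`, the subgraph of `Q_n^d` induced on `f`-free words
is isometric in `Q_n^d`. -/
def LeeIsometric {l d : ℕ} (f : Fin l → ZMod d) : Prop :=
  ∀ (n : ℕ) (u v : Fin n → ZMod d) (hu : Free f u) (hv : Free f v),
    ((QGraph n d).induce {w | Free f w}).dist ⟨u, hu⟩ ⟨v, hv⟩ = (QGraph n d).dist u v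

section Core
variable {A : Type*} [DecidableEq A] {l : ℕ}

/-- `f` has a mismatch at offset `y` for shift `q`. -/
def mismF (f : Fin l → A) (q y : ℕ) : Prop :=
  ∃ h : y + q < l, f ⟨y, by omega⟩ ≠ f ⟨y + q, h⟩

/-- The 2-error border condition, in shift form. -/
def border2 (f : Fin l → A) : Prop :=
  ∃ q a b, 0 < q ∧ a < b ∧ mismF f q a ∧ mismF f q b ∧ ∀ y, mismF f q y → y = a ∨ y = b

lemma border_iff (f : Fin l → A) : hasKErrorBorder f 2 ↔ border2 f := by
  constructor
  · rintro ⟨m0, hm0, hml, hd⟩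
    rw [hammingDist, card_eq_two] at hd
    obtain ⟨x, y, hlt, hset⟩ : ∃ x y : Fin m0, x.1 < y.1 ∧
        (Finset.univ.filter fun i : Fin m0 =>
          (f ⟨i.1, by omega⟩ : A) ≠ f ⟨l - m0 + i.1, by omega⟩) = {x, y} := by
      obtain ⟨x, y, hxy, hset⟩ := hd
      rcases lt_or_gt_of_ne (Fin.val_ne_of_ne hxy) with hlt | hlt
      · exact ⟨x, y, hlt, hset⟩
      · exact ⟨y, x, hlt, by rw [hset, pair_comm]⟩
    have hmem : ∀ z : Fin m0, z ∈ (Finset.univ.filter fun i : Fin m0 =>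
          (f ⟨i.1, by omega⟩ : A) ≠ f ⟨l - m0 + i.1, by omega⟩) ↔
          (f ⟨z.1, by omega⟩ : A) ≠ f ⟨l - m0 + z.1, by omega⟩ := by
      intro z; rw [mem_filter]; simp
    refine ⟨l - m0, x.1, y.1, by omega, hlt, ?_, ?_, ?_⟩
    · have hx := (hmem x).mp (by rw [hset]; simp)
      exact ⟨by omega, by convert hx using 3 <;> omega⟩
    · have hx := (hmem y).mp (by rw [hset]; simp)
      exact ⟨by omega, by convert hx using 3 <;> omega⟩
    · rintro z ⟨hz, hzne⟩
      have hzm : z < m0 := by omega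
      have : (⟨z, hzm⟩ : Fin m0) ∈ (Finset.univ.filter fun i : Fin m0 =>
          (f ⟨i.1, by omega⟩ : A) ≠ f ⟨l - m0 + i.1, by omega⟩) := by
        rw [hmem]
        show (f ⟨z, by omega⟩ : A) ≠ f ⟨l - m0 + z, by omega⟩
        convert hzne using 3 <;> omega
      rw [hset] at this
      simp only [mem_insert, mem_singleton] at this
      rcases this with h | h
      · left; rw [← h]
      · right; rw [← h]
  · rintro ⟨q, a, b, hq, hab, ⟨hbl1, ha⟩, ⟨hbl, hb⟩, hoth⟩
    refine ⟨l - q, by omega, by omega, ?_⟩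
    rw [hammingDist, card_eq_two]
    refine ⟨⟨a, by omega⟩, ⟨b, by omega⟩, by simp [Fin.ext_iff]; omega, ?_⟩
    ext i
    simp only [mem_filter, mem_univ, true_and, mem_insert, mem_singleton, Fin.ext_iff]
    constructor
    · intro hi
      have : mismF f q i.1 := ⟨by omega, by convert hi using 3 <;> omega⟩
      rcases hoth _ this with h | h
      · left; exact h
      · right; exact h
    · rintro (h | h)
      · convert ha using 3 <;> omega
      · convert hb using 3 <;> omega

end Core

section CoreB
variable {A : Type*} [DecidableEq A] {l : ℕ}

lemma not_isometric_of_pair {n : ℕ} (f : Fin l → A) (u v : Fin n → A)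
    (hu : Free f u) (hv : Free f v) (hne : u ≠ v)
    (hbad : ∀ p, u p ≠ v p → ¬ Free f (Function.update u p (v p))) :
    ¬ HammingIsometric f := by
  intro hiso
  obtain ⟨w, h0, hlast, hfree, hstep⟩ := hiso n u v hu hv
  have hd : 0 < hammingDist u v := by
    rcases Nat.eq_zero_or_pos (hammingDist u v) with h | h
    · exact absurd (hammingDist_eq_zero.mp h) hne
    · exact h
  obtain ⟨p, hp1, hp2⟩ := hstep ⟨0, hd⟩
  have hcs : (⟨0, hd⟩ : Fin (hammingDist u v)).castSucc = 0 := rfl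
  rw [hcs, h0] at hp1 hp2
  exact hbad p hp1 (hp2 ▸ hfree (⟨0, hd⟩ : Fin (hammingDist u v)).succ)

lemma hammingDist_update {n : ℕ} (u v : Fin n → A) (p : Fin n) (hp : u p ≠ v p) :
    hammingDist u v = hammingDist (Function.update u p (v p)) v + 1 := by
  have : (Finset.univ.filter fun i => Function.update u p (v p) i ≠ v i)
      = (Finset.univ.filter fun i => u i ≠ v i).erase p := by
    ext i
    simp only [mem_filter, mem_univ, true_and, mem_erase]
    rcases eq_or_ne i p with rfl | h
    · simp [Function.update_self]
    · simp [Function.update_of_ne h, h]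
  rw [hammingDist, hammingDist, this, card_erase_of_mem (by simp [hp])]
  have : 0 < (Finset.univ.filter fun i => u i ≠ v i).card :=
    card_pos.mpr ⟨p, by simp [hp]⟩
  omega

lemma freeTransform_mk {n : ℕ} (f : Fin l → A) (u v : Fin n → A) (d : ℕ)
    (hd : hammingDist u v = d) (w : Fin (d + 1) → Fin n → A)
    (h0 : w 0 = u) (hl : w (Fin.last d) = v) (hf : ∀ j, Free f (w j))
    (hs : ∀ j : Fin d, ∃ p, w j.castSucc p ≠ v p ∧
        w j.succ = Function.update (w j.castSucc) p (v p)) :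
    FreeTransform f u v := by subst hd; exact ⟨w, h0, hl, hf, hs⟩

lemma freeTransform_of_eq {n : ℕ} (f : Fin l → A) (u v : Fin n → A)
    (hfu : Free f u) (huv : u = v) : FreeTransform f u v := by
  subst huv
  refine freeTransform_mk f u u 0 (hammingDist_self u) (fun _ => u) rfl rfl (fun _ => hfu)
    (fun j => absurd j.isLt (by omega))

lemma freeTransform_step {n : ℕ} (f : Fin l → A) (u v : Fin n → A) (p : Fin n)
    (hp : u p ≠ v p) (hfu : Free f u)
    (hT : FreeTransform f (Function.update u p (v p)) v) : FreeTransform f u v := by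
  obtain ⟨w, h0, hlast, hfree, hstep⟩ := hT
  refine freeTransform_mk f u v (hammingDist (Function.update u p (v p)) v + 1)
    (hammingDist_update u v p hp) (Fin.cons u w) (Fin.cons_zero _ _) ?_ ?_ ?_
  · rw [← Fin.succ_last, Fin.cons_succ]; exact hlast
  · intro j
    rcases Fin.eq_zero_or_eq_succ j with rfl | ⟨i, rfl⟩
    · rw [Fin.cons_zero]; exact hfu
    · rw [Fin.cons_succ]; exact hfree i
  · intro j
    rcases Fin.eq_zero_or_eq_succ j with rfl | ⟨i, rfl⟩
    · refine ⟨p, ?_, ?_⟩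
      · rw [Fin.castSucc_zero, Fin.cons_zero]; exact hp
      · rw [Fin.castSucc_zero, Fin.cons_zero, Fin.cons_succ]; exact h0
    · refine ⟨(hstep i).choose, ?_, ?_⟩
      · rw [← Fin.succ_castSucc, Fin.cons_succ]
        exact (hstep i).choose_spec.1
      · rw [← Fin.succ_castSucc, Fin.cons_succ, Fin.cons_succ]
        exact (hstep i).choose_spec.2

end CoreB

section CoreC
variable {A : Type*} [DecidableEq A] {l : ℕ}

/-- Total extension of `f` to ℕ. -/
def Fe (f : Fin l → A) (d0 : A) : ℕ → A := fun y => if h : y < l then f ⟨y, h⟩ else d0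

lemma mismF_iff (f : Fin l → A) (d0 : A) (q y : ℕ) :
    mismF f q y ↔ y + q < l ∧ Fe f d0 y ≠ Fe f d0 (y + q) := by
  unfold mismF Fe
  constructor
  · rintro ⟨h, hne⟩
    refine ⟨h, ?_⟩
    rw [dif_pos (by omega), dif_pos h]
    exact hne
  · rintro ⟨h, hne⟩
    refine ⟨h, ?_⟩
    rw [dif_pos (by omega), dif_pos h] at hne
    exact hne

lemma border2_of_windows {n : ℕ} (f : Fin l → A) (d0 : A) (u : Fin n → A)
    (P Y JP JY : ℕ) (hPY : P ≠ Y) (hJJ : JP < JY)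
    (hJPl : JP + l ≤ n) (hJYl : JY + l ≤ n)
    (hPwin : JP ≤ P ∧ P < JP + l) (hYwin : JY ≤ Y ∧ Y < JY + l)
    (hPin : JY ≤ P) (hYlt : Y < JP + l)
    (hWP : ∀ x (hx1 : JP ≤ x) (hx2 : x < JP + l) (hxP : x ≠ P) (hxn : x < n),
      u ⟨x, hxn⟩ = Fe f d0 (x - JP))
    (hWY : ∀ x (hx1 : JY ≤ x) (hx2 : x < JY + l) (hxY : x ≠ Y) (hxn : x < n),
      u ⟨x, hxn⟩ = Fe f d0 (x - JY))
    (huP : u ⟨P, by omega⟩ ≠ Fe f d0 (P - JP))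
    (huY : u ⟨Y, by omega⟩ ≠ Fe f d0 (Y - JY)) :
    border2 f := by
  have hl0 : 0 < l := by omega
  set q' := JY - JP with hq'
  -- the two mismatch offsets
  have hmP : Fe f d0 (P - JY) ≠ Fe f d0 (P - JY + q') := by
    have h1 : u ⟨P, by omega⟩ = Fe f d0 (P - JY) :=
      hWY P hPin (by omega) hPY (by omega)
    have h2 : P - JY + q' = P - JP := by omega
    rw [h2, ← h1]
    exact huP
  have hmY : Fe f d0 (Y - JY) ≠ Fe f d0 (Y - JY + q') := by
    have h1 : u ⟨Y, by omega⟩ = Fe f d0 (Y - JP) :=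
      hWP Y (by omega) hYlt (Ne.symm hPY) (by omega)
    have h2 : Y - JY + q' = Y - JP := by omega
    rw [h2, ← h1]
    intro hc
    exact huY hc.symm
  have hoth : ∀ y0, y0 + q' < l → Fe f d0 y0 ≠ Fe f d0 (y0 + q') →
      y0 = P - JY ∨ y0 = Y - JY := by
    intro y0 hy0 hne0
    by_contra hcc
    push_neg at hcc
    apply hne0
    have hz1 : u ⟨JY + y0, by omega⟩ = Fe f d0 y0 := by
      have := hWY (JY + y0) (by omega) (by omega)
        (by intro hc; exact hcc.2 (by omega)) (by omega)
      rw [this]; congr 1; omega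
    have hz2 : u ⟨JY + y0, by omega⟩ = Fe f d0 (y0 + q') := by
      have := hWP (JY + y0) (by omega) (by omega)
        (by intro hc; exact hcc.1 (by omega)) (by omega)
      rw [this]; congr 1; omega
    rw [← hz1, ← hz2]
  have hPYv : P - JY ≠ Y - JY := by omega
  rcases lt_or_gt_of_ne hPYv with h | h
  · exact ⟨q', P - JY, Y - JY, by omega, h,
      (mismF_iff f d0 _ _).mpr ⟨by omega, hmP⟩,
      (mismF_iff f d0 _ _).mpr ⟨by omega, hmY⟩,
      fun y0 hy0 => by
        rw [mismF_iff f d0] at hy0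
        exact hoth y0 hy0.1 hy0.2⟩
  · exact ⟨q', Y - JY, P - JY, by omega, h,
      (mismF_iff f d0 _ _).mpr ⟨by omega, hmY⟩,
      (mismF_iff f d0 _ _).mpr ⟨by omega, hmP⟩,
      fun y0 hy0 => by
        rw [mismF_iff f d0] at hy0
        rcases hoth y0 hy0.1 hy0.2 with h1 | h1
        · right; exact h1
        · left; exact h1⟩

lemma exists_free_flip {n : ℕ} (f : Fin l → A) (u v : Fin n → A)
    (hnb : ¬ hasKErrorBorder f 2) (hu : Free f u) (hv : Free f v) (hne : u ≠ v) :
    ∃ p, u p ≠ v p ∧ Free f (Function.update u p (v p)) := by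
  classical
  by_contra hcon
  push_neg at hcon
  obtain ⟨p0, hp0⟩ := Function.ne_iff.mp hne
  set d0 : A := u p0 with hd0
  have hJex : ∀ p : Fin n, u p ≠ v p → ∃ j, occursAt f (Function.update u p (v p)) j := by
    intro p hp
    have h := hcon p hp
    unfold Free at h
    push_neg at h
    exact h
  choose J hJ using hJex
  have hWlen : ∀ p hp, J p hp + l ≤ n := fun p hp => (hJ p hp).1
  have hl0 : 0 < l := by
    by_contra hl
    exact hu 0 ⟨by omega, fun i => absurd i.isLt (by omega)⟩
  have hWeq : ∀ p (hp : u p ≠ v p) (i : Fin l),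
      (Function.update u p (v p)) ⟨J p hp + i.1, by
        have := i.isLt; have := hWlen p hp; omega⟩ = f i :=
    fun p hp => (hJ p hp).2
  have hWin : ∀ p hp, J p hp ≤ p.1 ∧ p.1 < J p hp + l := by
    intro p hp
    by_contra hcc
    push_neg at hcc
    apply hu (J p hp)
    refine ⟨hWlen p hp, fun i => ?_⟩
    have h2 := hWeq p hp i
    rwa [Function.update_of_ne ?_] at h2
    intro hip
    have hv1 : J p hp + i.1 = p.1 := congrArg Fin.val hip
    have hi := i.isLt
    have := hcc (by omega)
    omega
  -- window equality in ℕ form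
  have hW2 : ∀ p (hp : u p ≠ v p) x (hx1 : J p hp ≤ x) (hx2 : x < J p hp + l)
      (hxp : x ≠ p.1) (hxn : x < n), u ⟨x, hxn⟩ = Fe f d0 (x - J p hp) := by
    intro p hp x hx1 hx2 hxp hxn
    have hwl := hWlen p hp
    have h2 := hWeq p hp ⟨x - J p hp, by omega⟩
    rw [Function.update_of_ne (by
      intro hc
      exact hxp (by have := congrArg Fin.val hc; simp at this; omega))] at h2
    have e1 : (⟨x, hxn⟩ : Fin n) = ⟨J p hp + (x - J p hp), by omega⟩ :=
      Fin.ext (by show x = J p hp + (x - J p hp); omega)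
    rw [e1, h2]
    unfold Fe
    rw [dif_pos (by omega)]
  have hW4 : ∀ p (hp : u p ≠ v p), v p = Fe f d0 (p.1 - J p hp) := by
    intro p hp
    have hwin := hWin p hp
    have hwl := hWlen p hp
    have h2 := hWeq p hp ⟨p.1 - J p hp, by omega⟩
    have e1 : (⟨J p hp + (p.1 - J p hp), by omega⟩ : Fin n) = p :=
      Fin.ext (by show J p hp + (p.1 - J p hp) = p.1; omega)
    rw [e1, Function.update_self] at h2
    rw [h2]
    unfold Fe
    rw [dif_pos (by omega)]
  have hW5 : ∀ p (hp : u p ≠ v p), u p ≠ Fe f d0 (p.1 - J p hp) := by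
    intro p hp
    rw [← hW4 p hp]
    exact hp
  -- every window contains another differing position
  have fact3 : ∀ p (hp : u p ≠ v p), ∃ z : Fin n, u z ≠ v z ∧ z ≠ p ∧
      J p hp ≤ z.1 ∧ z.1 < J p hp + l := by
    intro p hp
    have hwl := hWlen p hp
    have hwin := hWin p hp
    have hvocc := hv (J p hp)
    unfold occursAt at hvocc
    push_neg at hvocc
    obtain ⟨i, hi⟩ := hvocc (hWlen p hp)
    have hii := i.isLt
    have hnep : J p hp + i.1 ≠ p.1 := by
      intro hc
      apply hi
      have e1 : (⟨J p hp + i.1, by omega⟩ : Fin n) = p := Fin.ext hc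
      rw [e1, hW4 p hp]
      unfold Fe
      rw [dif_pos (by omega)]
      exact congrArg f (Fin.ext (by show p.1 - J p hp = i.1; omega))
    refine ⟨⟨J p hp + i.1, by omega⟩, ?_, ?_,
      (by show J p hp ≤ J p hp + i.1; omega), (by show J p hp + i.1 < J p hp + l; omega)⟩
    · have h1 := hW2 p hp (J p hp + i.1) (by omega) (by omega) hnep (by omega)
      rw [h1]
      intro hc
      apply hi
      rw [← hc]
      unfold Fe
      rw [dif_pos (by omega)]
      exact congrArg f (Fin.ext (by show J p hp + i.1 - J p hp = i.1; omega))
    · intro hc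
      exact hnep (congrArg Fin.val hc)
  -- a mutual pair yields a border
  have hmut : ∀ p y (hp : u p ≠ v p) (hy : u y ≠ v y), p ≠ y →
      J p hp ≤ y.1 → y.1 < J p hp + l → J y hy ≤ p.1 → p.1 < J y hy + l → False := by
    intro p y hp hy hne2 h1 h2 h3 h4
    have hwinp := hWin p hp
    have hwiny := hWin y hy
    have hwlp := hWlen p hp
    have hwly := hWlen y hy
    have hJne : J p hp ≠ J y hy := by
      intro hc
      have h5 := hW2 p hp y.1 h1 h2 (fun hcc => hne2 (Fin.ext hcc.symm)) y.isLt
      have h6 := hW5 y hy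
      rw [← hc] at h6
      exact h6 (by rw [← h5])
    apply hnb
    rw [border_iff]
    rcases lt_or_gt_of_ne hJne with hlt | hlt
    · exact border2_of_windows f d0 u p.1 y.1 (J p hp) (J y hy)
        (fun hc => hne2 (Fin.ext hc)) hlt hwlp hwly hwinp hwiny h3 h2
        (fun x hx1 hx2 hxP hxn => hW2 p hp x hx1 hx2 (by simpa using hxP) hxn)
        (fun x hx1 hx2 hxY hxn => hW2 y hy x hx1 hx2 (by simpa using hxY) hxn)
        (hW5 p hp) (hW5 y hy)
    · exact border2_of_windows f d0 u y.1 p.1 (J y hy) (J p hp)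
        (fun hc => hne2 (Fin.ext hc.symm)) hlt hwly hwlp hwiny hwinp h1 h4
        (fun x hx1 hx2 hxY hxn => hW2 y hy x hx1 hx2 (by simpa using hxY) hxn)
        (fun x hx1 hx2 hxP hxn => hW2 p hp x hx1 hx2 (by simpa using hxP) hxn)
        (hW5 y hy) (hW5 p hp)
  -- the induction: no differing position to the left inside a window
  have good : ∀ N (p : Fin n) (hp : u p ≠ v p), p.1 = N →
      ∀ y : Fin n, u y ≠ v y → y.1 < p.1 → y.1 < J p hp := by
    intro N
    induction N using Nat.strong_induction_on with
    | _ N ih =>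
      intro p hp hpN y hy hyp
      by_contra hcc
      push_neg at hcc
      -- y* = maximal differing position below p
      have hSne : (Finset.univ.filter fun z : Fin n => u z ≠ v z ∧ z.1 < p.1).Nonempty :=
        ⟨y, by simp only [Finset.mem_filter, Finset.mem_univ, true_and]; exact ⟨hy, hyp⟩⟩
      set ys := (Finset.univ.filter fun z : Fin n => u z ≠ v z ∧ z.1 < p.1).max' hSne with hys
      have hysmem := (Finset.univ.filter fun z : Fin n => u z ≠ v z ∧ z.1 < p.1).max'_mem hSne
      rw [Finset.mem_filter] at hysmem
      have hysd : u ys ≠ v ys := hysmem.2.1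
      have hysp : ys.1 < p.1 := hysmem.2.2
      have hyle : y ≤ ys := Finset.le_max' _ y
        (by simp only [Finset.mem_filter, Finset.mem_univ, true_and]; exact ⟨hy, hyp⟩)
      have hwinp := hWin p hp
      have hwiny := hWin ys hysd
      have hysinp : J p hp ≤ ys.1 ∧ ys.1 < J p hp + l := ⟨le_trans hcc hyle, by omega⟩
      obtain ⟨z, hz1, hz2, hz3, hz4⟩ := fact3 ys hysd
      have hzvys : z.1 ≠ ys.1 := fun hc => hz2 (Fin.ext hc)
      rcases lt_or_gt_of_ne hzvys with hlt | hlt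
      · have := ih ys.1 (by omega) ys hysd rfl z hz1 hlt
        omega
      · have hzp : p.1 ≤ z.1 := by
          by_contra hzp
          push_neg at hzp
          have : z ≤ ys := Finset.le_max' _ z
            (by simp only [Finset.mem_filter, Finset.mem_univ, true_and]; exact ⟨hz1, hzp⟩)
          have : z.1 ≤ ys.1 := this
          omega
        exact hmut p ys hp hysd (fun hc => by rw [hc] at hpN; omega)
          hysinp.1 hysinp.2 (by omega) (by omega)
  -- conclusion: the maximal differing position gives a contradiction
  have hDne : (Finset.univ.filter fun z : Fin n => u z ≠ v z).Nonempty :=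
    ⟨p0, by simp only [Finset.mem_filter, Finset.mem_univ, true_and]; exact hp0⟩
  set pm := (Finset.univ.filter fun z : Fin n => u z ≠ v z).max' hDne with hpm
  have hpmmem := (Finset.univ.filter fun z : Fin n => u z ≠ v z).max'_mem hDne
  rw [Finset.mem_filter] at hpmmem
  have hpmd : u pm ≠ v pm := hpmmem.2
  obtain ⟨z, hz1, hz2, hz3, hz4⟩ := fact3 pm hpmd
  have hzle : z ≤ pm := Finset.le_max' _ z
    (by simp only [Finset.mem_filter, Finset.mem_univ, true_and]; exact hz1)
  have hzlt : z.1 < pm.1 := by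
    rcases lt_or_eq_of_le hzle with h | h
    · exact h
    · exact absurd h hz2
  have := good pm.1 pm hpmd rfl z hz1 hzlt
  omega

end CoreC

section CoreD
variable {A : Type*} [DecidableEq A] {l : ℕ}

lemma isometric_of_no_border (f : Fin l → A) (hnb : ¬ hasKErrorBorder f 2) :
    HammingIsometric f := by
  intro n u v hu hv
  suffices H : ∀ d (u v : Fin n → A), hammingDist u v = d → Free f u → Free f v →
      FreeTransform f u v from H _ u v rfl hu hv
  intro d
  induction d with
  | zero =>
    intro u v hd hu hv
    exact freeTransform_of_eq f u v hu (hammingDist_eq_zero.mp hd)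
  | succ d ih =>
    intro u v hd hu hv
    have hne : u ≠ v := by
      intro hc
      rw [hc, hammingDist_self] at hd
      omega
    obtain ⟨p, hp, hfree⟩ := exists_free_flip f u v hnb hu hv hne
    have hd2 := hammingDist_update u v p hp
    exact freeTransform_step f u v p hp hu (ih _ v (by omega) hfree hv)

end CoreD

section Pure
variable {A : Type*}

/-- The key structure lemma: an occurrence certificate at shift `j` for the naive pair at the
maximal 2-error shift `q` forces the rigid "hard" structure. -/
lemma structure_of_cert (l j q a b : ℕ) (F : ℕ → A)
    (hj0 : 0 < j) (hjq : j < q) (hab : a < b) (hbl : b + q < l)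
    (hFa : F a ≠ F (a + q)) (hFb : F b ≠ F (b + q))
    (hoth : ∀ y, y + q < l → F y ≠ F (y + q) → y = a ∨ y = b)
    (hmax : ∀ s a' b', q < s → a' < b' → b' + s < l → F a' ≠ F (a' + s) →
      F b' ≠ F (b' + s) → (∀ y, y + s < l → F y ≠ F (y + s) → y = a' ∨ y = b') → False)
    (ci : ∀ y, y + j < l → y ≠ a + q - j → F y = F (y + j))
    (cii : F (a + q - j) = F a)
    (ciii : ∀ y, l - q ≤ y → y < l - q + j → F y = F (y + (q - j))) :
    b = a + j ∧ q = 2 * j ∧ F a = F b ∧ a < j ∧ l ≤ b + 3 * j := by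
  have h1 : F a = F (a + j) := ci a (by omega) (by omega)
  -- Step 1 : b = a + j
  have hb' : b = a + j := by
    by_cases hc : a + j + q < l
    · have h2 : F (a + q) = F (a + q + j) := ci (a + q) (by omega) (by omega)
      have h3 : F (a + j) ≠ F (a + j + q) := by
        rw [show a + j + q = a + q + j by omega, ← h2, ← h1]
        exact hFa
      have := hoth (a + j) (by omega) h3
      omega
    · have h2 := ciii (a + j) (by omega) (by omega)
      rw [show a + j + (q - j) = a + q by omega] at h2
      exact absurd (h1.trans h2) hFa
  subst hb'
  -- Step 3 : q = 2 j
  have hq2 : q = 2 * j := by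
    by_contra hq2
    have g1 : F (a + j) = F (a + j + j) := ci (a + j) (by omega) (by omega)
    have g2 : F (a + j + j) = F (a + j + q) := by
      by_cases hc : l - q ≤ a + j + j
      · have h2 := ciii (a + j + j) hc (by omega)
        rw [show a + j + j + (q - j) = a + j + q by omega] at h2
        exact h2
      · by_contra hne
        have h4 : F (a + j + q) = F (a + j + q + j) := ci (a + j + q) (by omega) (by omega)
        have h5 : F (a + j + j) ≠ F (a + j + j + q) := by
          rw [show a + j + j + q = a + j + q + j by omega, ← h4]
          exact hne
        have := hoth (a + j + j) (by omega) h5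
        omega
    exact hFb (g1.trans g2)
  subst hq2
  -- basic consequences
  have hFab : F a = F (a + j) := h1
  have per : ∀ y, y + j < l → y ≠ a + j → F y = F (y + j) := by
    intro y hy1 hy2
    exact ci y hy1 (by omega)
  have herr : F (a + j) ≠ F (a + j + j) := by
    intro hc
    apply hFa
    rw [hFab, hc]
    exact congrArg F (by omega)
  -- class lemmas
  have CLa : ∀ i y, y + i * j = a + j → F y = F (a + j) := by
    intro i
    induction i with
    | zero => intro y hy; exact congrArg F (by omega)
    | succ i ih =>
      intro y hy
      have hs : (i + 1) * j = i * j + j := Nat.succ_mul i j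
      have hstep : F y = F (y + j) := per y (by omega) (by omega)
      exact hstep.trans (ih (y + j) (by omega))
  have CLb : ∀ i, a + 2 * j + i * j < l → F (a + 2 * j + i * j) = F (a + 2 * j) := by
    intro i
    induction i with
    | zero => intro hy; exact congrArg F (by omega)
    | succ i ih =>
      intro hy
      have hs : (i + 1) * j = i * j + j := Nat.succ_mul i j
      have hb1 : a + 2 * j + i * j < l := by omega
      have hstep : F (a + 2 * j + i * j) = F (a + 2 * j + i * j + j) :=
        per _ (by omega) (by omega)
      calc F (a + 2 * j + (i + 1) * j) = F (a + 2 * j + i * j + j) := congrArg F (by omega)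
        _ = F (a + 2 * j + i * j) := hstep.symm
        _ = F (a + 2 * j) := ih hb1
  have CLc : ∀ k y, y + k * j < l → (∀ i, i ≤ k → y + i * j ≠ a + j) →
      F y = F (y + k * j) := by
    intro k
    induction k with
    | zero => intro y hy hcond; exact congrArg F (by omega)
    | succ k ih =>
      intro y hy hcond
      have hs : (k + 1) * j = k * j + j := Nat.succ_mul k j
      have h0 : y ≠ a + j := by
        have := hcond 0 (by omega)
        omega
      have hstep : F y = F (y + j) := per y (by omega) h0
      have hrest : F (y + j) = F (y + j + k * j) := by
        refine ih (y + j) (by omega) ?_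
        intro i hi
        have := hcond (i + 1) (by omega)
        have hs2 : (i + 1) * j = i * j + j := Nat.succ_mul i j
        omega
      calc F y = F (y + j + k * j) := hstep.trans hrest
        _ = F (y + (k + 1) * j) := congrArg F (by omega)
  -- the four regimes
  by_cases hR1 : j ≤ a
  · -- a ≥ j
    by_cases hR2 : a + j + 3 * j < l
    · -- regime R : descent contradiction
      exfalso
      set K := (a + j) / j with hK
      set r0 := (a + j) % j with hr0
      have hdm : K * j + r0 = a + j := by
        rw [hK, hr0, Nat.mul_comm]
        exact Nat.div_add_mod (a + j) j
      have hr0j : r0 < j := Nat.mod_lt _ hj0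
      have hK2 : 2 ≤ K := by
        by_contra hc
        push_neg at hc
        interval_cases K <;> omega
      set M := (l - 1 - (a + j)) / j with hM
      set rM := (l - 1 - (a + j)) % j with hrM
      have hdm2 : M * j + rM = l - 1 - (a + j) := by
        rw [hM, hrM, Nat.mul_comm]
        exact Nat.div_add_mod _ j
      have hrMj : rM < j := Nat.mod_lt _ hj0
      have hM3 : 3 ≤ M := by
        by_contra hc
        push_neg at hc
        interval_cases M <;> omega
      set k := K + M - 1 with hk
      have hkj : k * j + j = K * j + M * j := by
        rw [hk, Nat.sub_mul, Nat.one_mul, Nat.add_mul]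
        have h2j : 2 * j ≤ K * j := Nat.mul_le_mul_right j hK2
        have h3j : 3 * j ≤ M * j := Nat.mul_le_mul_right j hM3
        omega
      have h2j : 2 * j ≤ K * j := Nat.mul_le_mul_right j hK2
      have h3j : 3 * j ≤ M * j := Nat.mul_le_mul_right j hM3
      -- the two errors r0, r0 + j at shift k*j
      have e1v : F r0 = F (a + j) := CLa K r0 (by omega)
      have e2v : F (r0 + j) = F (a + j) := by
        refine CLa (K - 1) (r0 + j) ?_
        have : (K - 1) * j = K * j - j := by rw [Nat.sub_mul, Nat.one_mul]
        omega
      have e1t : F (r0 + k * j) = F (a + 2 * j) := by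
        have harith : r0 + k * j = a + 2 * j + (M - 2) * j := by
          have : (M - 2) * j = M * j - 2 * j := by rw [Nat.sub_mul]
          omega
        rw [harith]
        exact CLb (M - 2) (by
          have : (M - 2) * j = M * j - 2 * j := by rw [Nat.sub_mul]
          omega)
      have e2t : F (r0 + j + k * j) = F (a + 2 * j) := by
        have harith : r0 + j + k * j = a + 2 * j + (M - 1) * j := by
          have : (M - 1) * j = M * j - 1 * j := by rw [Nat.sub_mul]
          omega
        rw [harith]
        exact CLb (M - 1) (by
          have : (M - 1) * j = M * j - 1 * j := by rw [Nat.sub_mul]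
          omega)
      refine hmax (k * j) r0 (r0 + j) (by omega) (by omega) (by omega) ?_ ?_ ?_
      · rw [e1v, e1t]
        intro hc
        exact herr (hc.trans (congrArg F (by omega)))
      · rw [e2v, e2t]
        intro hc
        exact herr (hc.trans (congrArg F (by omega)))
      · intro y hy hne
        have hex : ∃ i, i ≤ k ∧ y + i * j = a + j := by
          by_contra hno
          push_neg at hno
          exact hne (CLc k y hy (fun i hi => hno i hi))
        obtain ⟨i, hik, hiv⟩ := hex
        have hiK : i ≤ K := by
          by_contra hc
          push_neg at hc
          have : (K + 1) * j ≤ i * j := Nat.mul_le_mul_right j hc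
          rw [Nat.add_mul, Nat.one_mul] at this
          omega
        have hiK1 : K - 1 ≤ i := by
          by_contra hc
          push_neg at hc
          -- i ≤ K - 2, so y + k*j ≥ a+j + (M+1)*j > l - 1
          have hc2 : i + 2 ≤ K := by omega
          have : (i + 2) * j ≤ K * j := Nat.mul_le_mul_right j hc2
          rw [Nat.add_mul] at this
          omega
        have : i = K ∨ i = K - 1 := by omega
        rcases this with rfl | rfl
        · left; omega
        · right
          have : (K - 1) * j = K * j - 1 * j := by rw [Nat.sub_mul]
          omega
    · -- R2 : a ≥ j, l ≤ b + 3j : exact-2 at shift 3j with errors a-j, a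
      exfalso
      refine hmax (3 * j) (a - j) a (by omega) (by omega) (by omega) ?_ ?_ ?_
      · have hv1 : F (a - j) = F (a + j) := CLa 2 (a - j) (by omega)
        rw [hv1, show a - j + 3 * j = a + j + j by omega]
        exact herr
      · have hv2 : F (a + 3 * j) = F (a + 2 * j) := by
          have := CLb 1 (by omega)
          rw [show a + 2 * j + 1 * j = a + 3 * j by omega] at this
          exact this
        rw [hv2, hFab]
        intro hc
        exact herr (hc.trans (congrArg F (by omega)))
      · intro y hy hne
        have hex : ∃ i, i ≤ 3 ∧ y + i * j = a + j := by
          by_contra hno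
          push_neg at hno
          exact hne (CLc 3 y hy (fun i hi => hno i hi))
        obtain ⟨i, hik, hiv⟩ := hex
        interval_cases i
        · omega
        · omega
        · omega
        · -- i = 3 : y + 3j = a + j, no mismatch
          exfalso
          apply hne
          exact (CLa 3 y hiv).trans (congrArg F hiv.symm)
  · -- a < j
    by_cases hR2 : a + j + 3 * j < l
    · -- R3 : exact-2 at shift 3j with errors a, a+j
      exfalso
      refine hmax (3 * j) a (a + j) (by omega) (by omega) (by omega) ?_ ?_ ?_
      · have hv2 : F (a + 3 * j) = F (a + 2 * j) := by
          have := CLb 1 (by omega)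
          rw [show a + 2 * j + 1 * j = a + 3 * j by omega] at this
          exact this
        rw [hv2, hFab]
        intro hc
        exact herr (hc.trans (congrArg F (by omega)))
      · have hv2 : F (a + j + 3 * j) = F (a + 2 * j) := by
          have := CLb 2 (by omega)
          rw [show a + 2 * j + 2 * j = a + j + 3 * j by omega] at this
          exact this
        rw [hv2]
        intro hc
        exact herr (hc.trans (congrArg F (by omega)))
      · intro y hy hne
        have hex : ∃ i, i ≤ 3 ∧ y + i * j = a + j := by
          by_contra hno
          push_neg at hno
          exact hne (CLc 3 y hy (fun i hi => hno i hi))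
        obtain ⟨i, hik, hiv⟩ := hex
        interval_cases i
        · omega
        · omega
        · omega
        · omega
    · exact ⟨rfl, rfl, hFab, by omega, by omega⟩

end Pure

section Dir2
variable {A : Type*} [DecidableEq A] {l : ℕ}

lemma finmk_eq {n x y : ℕ} (hx : x < n) (hy : y < n) (h : x = y) :
    (⟨x, hx⟩ : Fin n) = ⟨y, hy⟩ := Fin.ext h

lemma occA (f : Fin l → A) (d0 : A) {n : ℕ} (w : Fin n → A) (j : ℕ) (hjl : j + l ≤ n)
    (h : ∀ y (hy : y < l) (hn : j + y < n), w ⟨j + y, hn⟩ = Fe f d0 y) : occursAt f w j := by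
  refine ⟨hjl, fun i => ?_⟩
  have hi := i.isLt
  have h2 := h i.1 i.isLt (by omega)
  rw [h2]
  unfold Fe
  rw [dif_pos i.isLt]

lemma occB (f : Fin l → A) (d0 : A) {n : ℕ} (w : Fin n → A) (j : ℕ)
    (hocc : occursAt f w j) :
    j + l ≤ n ∧ ∀ y (hy : y < l) (hn : j + y < n), w ⟨j + y, hn⟩ = Fe f d0 y := by
  obtain ⟨hjl, h⟩ := hocc
  refine ⟨hjl, fun y hy hn => ?_⟩
  have h2 := h ⟨y, hy⟩
  rw [h2]
  unfold Fe
  rw [dif_pos hy]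

lemma chain_works (f : Fin l → A) (d0 : A) (t b : ℕ)
    (ht0 : 0 < t) (htb : t ≤ b) (hbt : b < 2 * t) (hb2 : b + 2 * t < l) (hl3 : l ≤ b + 3 * t)
    (per : ∀ y, y + t < l → y ≠ b → Fe f d0 y = Fe f d0 (y + t))
    (herr : Fe f d0 b ≠ Fe f d0 (b + t)) :
    ¬ HammingIsometric f := by
  have hFab : Fe f d0 (b - t) = Fe f d0 b := by
    have h := per (b - t) (by omega) (by omega)
    rw [show b - t + t = b by omega] at h
    exact h
  have hb2v : Fe f d0 (b + 2 * t) = Fe f d0 (b + t) := by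
    have h := per (b + t) (by omega) (by omega)
    rw [show b + t + t = b + 2 * t by omega] at h
    exact h.symm
  set U2 : Fin (l + 3 * t) → A := fun x =>
    if x.1 = b + t then Fe f d0 b else if x.1 < l then Fe f d0 x.1
    else Fe f d0 (x.1 - 3 * t) with hU2
  set V2 : Fin (l + 3 * t) → A := fun x =>
    if x.1 = b + 2 * t then Fe f d0 (b - t) else if x.1 = b + 3 * t then Fe f d0 (b + 2 * t)
    else if x.1 < l then Fe f d0 x.1 else Fe f d0 (x.1 - 3 * t) with hV2
  have hUval : ∀ (x : ℕ) (hx : x < l + 3 * t),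
      U2 ⟨x, hx⟩ = if x = b + t then Fe f d0 b else if x < l then Fe f d0 x
        else Fe f d0 (x - 3 * t) :=
    fun x hx => rfl
  have hVval : ∀ (x : ℕ) (hx : x < l + 3 * t),
      V2 ⟨x, hx⟩ = if x = b + 2 * t then Fe f d0 (b - t)
        else if x = b + 3 * t then Fe f d0 (b + 2 * t)
        else if x < l then Fe f d0 x else Fe f d0 (x - 3 * t) :=
    fun x hx => rfl
  -- step lemmas
  have uStep : ∀ (x : ℕ) (hx : x < l + 3 * t) (hx2 : x + t < l + 3 * t),
      x ≠ b → x ≠ b + t → x ≠ b + 2 * t → x ≠ b + 3 * t →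
      U2 ⟨x, hx⟩ = U2 ⟨x + t, hx2⟩ := by
    intro x hx hx2 h1 h2 h3 h4
    rw [hUval, hUval, if_neg h2, if_neg (by omega : ¬ x + t = b + t)]
    by_cases hc1 : x + t < l
    · rw [if_pos (by omega), if_pos hc1]
      exact per x (by omega) h1
    · by_cases hc2 : x < l
      · rw [if_pos hc2, if_neg hc1]
        have e1 : Fe f d0 (x - 2 * t) = Fe f d0 (x - t) := by
          have h := per (x - 2 * t) (by omega) (by omega)
          rw [show x - 2 * t + t = x - t by omega] at h
          exact h
        have e2 : Fe f d0 (x - t) = Fe f d0 x := by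
          have h := per (x - t) (by omega) (by omega)
          rw [show x - t + t = x by omega] at h
          exact h
        rw [show x + t - 3 * t = x - 2 * t by omega]
        exact (e1.trans e2).symm
      · rw [if_neg hc2, if_neg hc1]
        have h := per (x - 3 * t) (by omega) (by omega)
        rw [show x - 3 * t + t = x + t - 3 * t by omega] at h
        exact h
  have vStep : ∀ (x : ℕ) (hx : x < l + 3 * t) (hx2 : x + t < l + 3 * t),
      x ≠ b → x ≠ b + t → x ≠ b + 2 * t → x ≠ b + 3 * t →
      V2 ⟨x, hx⟩ = V2 ⟨x + t, hx2⟩ := by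
    intro x hx hx2 h1 h2 h3 h4
    rw [hVval, hVval, if_neg h3, if_neg h4, if_neg (by omega : ¬ x + t = b + 2 * t),
      if_neg (by omega : ¬ x + t = b + 3 * t)]
    by_cases hc1 : x + t < l
    · rw [if_pos (by omega), if_pos hc1]
      exact per x (by omega) h1
    · by_cases hc2 : x < l
      · rw [if_pos hc2, if_neg hc1]
        have e1 : Fe f d0 (x - 2 * t) = Fe f d0 (x - t) := by
          have h := per (x - 2 * t) (by omega) (by omega)
          rw [show x - 2 * t + t = x - t by omega] at h
          exact h
        have e2 : Fe f d0 (x - t) = Fe f d0 x := by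
          have h := per (x - t) (by omega) (by omega)
          rw [show x - t + t = x by omega] at h
          exact h
        rw [show x + t - 3 * t = x - 2 * t by omega]
        exact (e1.trans e2).symm
      · rw [if_neg hc2, if_neg hc1]
        have h := per (x - 3 * t) (by omega) (by omega)
        rw [show x - 3 * t + t = x + t - 3 * t by omega] at h
        exact h
  -- freeness of U2
  have hfreeU : Free f U2 := by
    intro j0 hocc
    obtain ⟨hjl, heq⟩ := occB f d0 U2 j0 hocc
    have hj3 : j0 ≤ 3 * t := by omega
    by_cases h0 : j0 = 0
    · have h := heq (b + t) (by omega) (by omega)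
      rw [finmk_eq _ (by omega : b + t < l + 3 * t) (by omega : j0 + (b + t) = b + t),
        hUval, if_pos rfl] at h
      exact herr h
    by_cases h1 : j0 = t
    · have h := heq (b + 2 * t) (by omega) (by omega)
      rw [finmk_eq _ (by omega : b + 3 * t < l + 3 * t) (by omega : j0 + (b + 2 * t) = b + 3 * t),
        hUval, if_neg (by omega), if_neg (by omega),
        show b + 3 * t - 3 * t = b by omega] at h
      exact herr (h.trans hb2v)
    by_cases h2 : j0 = 2 * t
    · have h := heq b (by omega) (by omega)
      rw [finmk_eq _ (by omega : b + 2 * t < l + 3 * t) (by omega : j0 + b = b + 2 * t),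
        hUval, if_neg (by omega), if_pos (by omega)] at h
      exact herr ((hb2v.symm.trans h).symm)
    by_cases h3 : j0 = 3 * t
    · have h := heq (b - t) (by omega) (by omega)
      rw [finmk_eq _ (by omega : b + 2 * t < l + 3 * t) (by omega : j0 + (b - t) = b + 2 * t),
        hUval, if_neg (by omega), if_pos (by omega)] at h
      exact herr ((hFab.symm.trans h.symm).trans hb2v)
    · have hx1 := heq b (by omega) (by omega)
      have hx2 := heq (b + t) (by omega) (by omega)
      have hstep := uStep (j0 + b) (by omega) (by omega)
        (by omega) (by omega) (by omega) (by omega)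
      rw [finmk_eq _ (by omega : j0 + (b + t) < l + 3 * t)
        (by omega : j0 + b + t = j0 + (b + t))] at hstep
      rw [hx1, hx2] at hstep
      exact herr hstep
  -- freeness of V2
  have hfreeV : Free f V2 := by
    intro j0 hocc
    obtain ⟨hjl, heq⟩ := occB f d0 V2 j0 hocc
    have hj3 : j0 ≤ 3 * t := by omega
    by_cases h0 : j0 = 0
    · have h := heq (b + 2 * t) (by omega) (by omega)
      rw [finmk_eq _ (by omega : b + 2 * t < l + 3 * t) (by omega : j0 + (b + 2 * t) = b + 2 * t),
        hVval, if_pos rfl] at h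
      exact herr ((hFab.symm.trans h).trans hb2v)
    by_cases h1 : j0 = t
    · have h := heq b (by omega) (by omega)
      rw [finmk_eq _ (by omega : b + t < l + 3 * t) (by omega : j0 + b = b + t),
        hVval, if_neg (by omega), if_neg (by omega), if_pos (by omega)] at h
      exact herr h.symm
    by_cases h2 : j0 = 2 * t
    · have h := heq (b - t) (by omega) (by omega)
      rw [finmk_eq _ (by omega : b + t < l + 3 * t) (by omega : j0 + (b - t) = b + t),
        hVval, if_neg (by omega), if_neg (by omega), if_pos (by omega)] at h
      exact herr (hFab.symm.trans h.symm)
    by_cases h3 : j0 = 3 * t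
    · have h := heq b (by omega) (by omega)
      rw [finmk_eq _ (by omega : b + 3 * t < l + 3 * t) (by omega : j0 + b = b + 3 * t),
        hVval, if_neg (by omega), if_pos rfl] at h
      exact herr (h.symm.trans hb2v)
    · have hx1 := heq b (by omega) (by omega)
      have hx2 := heq (b + t) (by omega) (by omega)
      have hstep := vStep (j0 + b) (by omega) (by omega)
        (by omega) (by omega) (by omega) (by omega)
      rw [finmk_eq _ (by omega : j0 + (b + t) < l + 3 * t)
        (by omega : j0 + b + t = j0 + (b + t))] at hstep
      rw [hx1, hx2] at hstep
      exact herr hstep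
  -- the pair differs
  have hUne : U2 ≠ V2 := by
    intro hc
    have h := congrFun hc ⟨b + t, by omega⟩
    rw [hUval, hVval, if_pos rfl, if_neg (by omega), if_neg (by omega), if_pos (by omega)] at h
    exact herr h
  -- all flips are bad
  apply not_isometric_of_pair f U2 V2 hfreeU hfreeV hUne
  intro p hpne
  have hp3 : p.1 = b + t ∨ p.1 = b + 2 * t ∨ p.1 = b + 3 * t := by
    by_contra hc
    push_neg at hc
    apply hpne
    show U2 ⟨p.1, p.2⟩ = V2 ⟨p.1, p.2⟩
    rw [hUval, hVval, if_neg hc.1, if_neg hc.2.1, if_neg hc.2.2]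
  intro hfr
  rcases hp3 with hp | hp | hp
  · -- flip at b + t : occurrence at 0
    apply hfr 0
    refine occA f d0 _ 0 (by omega) ?_
    intro y hy hn
    by_cases hyb : y = b + t
    · rw [show (⟨0 + y, hn⟩ : Fin (l + 3 * t)) = p from Fin.ext (by show 0 + y = p.1; omega),
        Function.update_self]
      show V2 ⟨p.1, p.2⟩ = Fe f d0 y
      rw [hVval, if_neg (by omega), if_neg (by omega), if_pos (by omega), hp, hyb]
    · rw [Function.update_of_ne (by
        intro hcc
        have := congrArg Fin.val hcc
        exact hyb (by simp only [Fin.val_mk] at this; omega))]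
      show U2 ⟨0 + y, hn⟩ = Fe f d0 y
      rw [finmk_eq _ (by omega : y < l + 3 * t) (by omega : 0 + y = y),
        hUval, if_neg hyb, if_pos hy]
  · -- flip at b + 2t : occurrence at 3t
    apply hfr (3 * t)
    refine occA f d0 _ (3 * t) (by omega) ?_
    intro y hy hn
    by_cases hyb : y = b - t
    · rw [show (⟨3 * t + y, hn⟩ : Fin (l + 3 * t)) = p from
        Fin.ext (by show 3 * t + y = p.1; omega), Function.update_self]
      show V2 ⟨p.1, p.2⟩ = Fe f d0 y
      rw [hVval, if_pos (by omega), hyb]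
    · rw [Function.update_of_ne (by
        intro hcc
        have := congrArg Fin.val hcc
        exact hyb (by simp only [Fin.val_mk] at this; omega))]
      show U2 ⟨3 * t + y, hn⟩ = Fe f d0 y
      rw [hUval, if_neg (by omega)]
      by_cases hc1 : 3 * t + y < l
      · rw [if_pos hc1]
        have hyb0 : y ≠ b := by omega
        have e1 : Fe f d0 y = Fe f d0 (y + t) := per y (by omega) hyb0
        have e2 : Fe f d0 (y + t) = Fe f d0 (y + 2 * t) := by
          have h := per (y + t) (by omega) (by omega)
          rw [show y + t + t = y + 2 * t by omega] at h
          exact h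
        have e3 : Fe f d0 (y + 2 * t) = Fe f d0 (y + 3 * t) := by
          have h := per (y + 2 * t) (by omega) (by omega)
          rw [show y + 2 * t + t = y + 3 * t by omega] at h
          exact h
        rw [show 3 * t + y = y + 3 * t by omega]
        exact ((e1.trans e2).trans e3).symm
      · rw [if_neg hc1, show 3 * t + y - 3 * t = y by omega]
  · -- flip at b + 3t : occurrence at t
    apply hfr t
    refine occA f d0 _ t (by omega) ?_
    intro y hy hn
    by_cases hyb : y = b + 2 * t
    · rw [show (⟨t + y, hn⟩ : Fin (l + 3 * t)) = p from
        Fin.ext (by show t + y = p.1; omega), Function.update_self]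
      show V2 ⟨p.1, p.2⟩ = Fe f d0 y
      rw [hVval, if_neg (by omega), if_pos (by omega), hyb]
    · rw [Function.update_of_ne (by
        intro hcc
        have := congrArg Fin.val hcc
        exact hyb (by simp only [Fin.val_mk] at this; omega))]
      show U2 ⟨t + y, hn⟩ = Fe f d0 y
      rw [hUval]
      by_cases hyb2 : y = b
      · rw [if_pos (by omega), hyb2]
      · rw [if_neg (by omega)]
        by_cases hc1 : t + y < l
        · rw [if_pos hc1, show t + y = y + t by omega]
          exact (per y (by omega) hyb2).symm
        · rw [if_neg hc1]
          have e1 : Fe f d0 (y - 2 * t) = Fe f d0 (y - t) := by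
            have h := per (y - 2 * t) (by omega) (by omega)
            rw [show y - 2 * t + t = y - t by omega] at h
            exact h
          have e2 : Fe f d0 (y - t) = Fe f d0 y := by
            have h := per (y - t) (by omega) (by omega)
            rw [show y - t + t = y by omega] at h
            exact h
          rw [show t + y - 3 * t = y - 2 * t by omega]
          exact e1.trans e2

end Dir2

section Final
variable {A : Type*} [DecidableEq A] {l : ℕ}

lemma not_isometric_of_border (f : Fin l → A) (hb : hasKErrorBorder f 2) :
    ¬ HammingIsometric f := by
  classical
  rw [border_iff] at hb
  obtain ⟨q0, a0, b0, hq00, hab0, hma0, hmb0, hoth0⟩ := hb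
  have hl0 : 0 < l := by obtain ⟨h, _⟩ := hma0; omega
  set d0 : A := f ⟨0, hl0⟩ with hd0
  let P : ℕ → Prop := fun s => ∃ a b, a < b ∧ mismF f s a ∧ mismF f s b ∧
      ∀ y, mismF f s y → y = a ∨ y = b
  haveI : DecidablePred P := Classical.decPred P
  have hPq0 : P q0 := ⟨a0, b0, hab0, hma0, hmb0, hoth0⟩
  have hq0l : q0 ≤ l := by obtain ⟨h, _⟩ := hma0; omega
  have hPq : P (Nat.findGreatest P l) := Nat.findGreatest_spec hq0l hPq0
  have hqge : q0 ≤ Nat.findGreatest P l := Nat.le_findGreatest hq0l hPq0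
  set q := Nat.findGreatest P l with hqdef
  have hq0 : 0 < q := by omega
  have hqmaxP : ∀ s, q < s → ¬ P s := by
    intro s hs hPs
    rcases le_or_gt s l with h | h
    · exact Nat.findGreatest_is_greatest hs h hPs
    · obtain ⟨a', b', hab', hma', _, _⟩ := hPs
      obtain ⟨hx, _⟩ := hma'
      omega
  obtain ⟨a, b, hab, hma, hmb, hoth⟩ := hPq
  obtain ⟨hal, hFa⟩ := (mismF_iff f d0 q a).mp hma
  obtain ⟨hbl, hFb⟩ := (mismF_iff f d0 q b).mp hmb
  have hothF : ∀ y, y + q < l → Fe f d0 y ≠ Fe f d0 (y + q) → y = a ∨ y = b := fun y h1 h2 =>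
    hoth y ((mismF_iff f d0 q y).mpr ⟨h1, h2⟩)
  have hmaxF : ∀ s a' b', q < s → a' < b' → b' + s < l → Fe f d0 a' ≠ Fe f d0 (a' + s) →
      Fe f d0 b' ≠ Fe f d0 (b' + s) →
      (∀ y, y + s < l → Fe f d0 y ≠ Fe f d0 (y + s) → y = a' ∨ y = b') → False := by
    intro s a' b' h1 h2 h3 h4 h5 h6
    exact hqmaxP s h1 ⟨a', b', h2, (mismF_iff f d0 s a').mpr ⟨by omega, h4⟩,
      (mismF_iff f d0 s b').mpr ⟨h3, h5⟩,
      fun y hy => h6 y ((mismF_iff f d0 s y).mp hy).1 ((mismF_iff f d0 s y).mp hy).2⟩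
  set U1 : Fin (l + q) → A := fun x => if x.1 = a + q then Fe f d0 a
    else if x.1 < l then Fe f d0 x.1 else Fe f d0 (x.1 - q) with hU1
  set V1 : Fin (l + q) → A := fun x => if x.1 = b + q then Fe f d0 b
    else if x.1 < l then Fe f d0 x.1 else Fe f d0 (x.1 - q) with hV1
  have hUval : ∀ (x : ℕ) (hx : x < l + q), U1 ⟨x, hx⟩ = if x = a + q then Fe f d0 a
      else if x < l then Fe f d0 x else Fe f d0 (x - q) := fun x hx => rfl
  have hVval : ∀ (x : ℕ) (hx : x < l + q), V1 ⟨x, hx⟩ = if x = b + q then Fe f d0 b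
      else if x < l then Fe f d0 x else Fe f d0 (x - q) := fun x hx => rfl
  by_cases hUfree : Free f U1
  · by_cases hVfree : Free f V1
    · -- naive pair works
      apply not_isometric_of_pair f U1 V1 hUfree hVfree ?_ ?_
      · intro hc
        have h := congrFun hc ⟨a + q, by omega⟩
        rw [hUval, hVval, if_pos rfl, if_neg (by omega), if_pos (by omega)] at h
        exact hFa h
      · intro p hpne hfr
        have hp2 : p.1 = a + q ∨ p.1 = b + q := by
          by_contra hc
          push_neg at hc
          apply hpne
          show U1 ⟨p.1, p.2⟩ = V1 ⟨p.1, p.2⟩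
          rw [hUval, hVval, if_neg hc.1, if_neg hc.2]
        rcases hp2 with hp | hp
        · apply hfr 0
          refine occA f d0 _ 0 (by omega) ?_
          intro y hy hn
          by_cases hyb : y = a + q
          · rw [show (⟨0 + y, hn⟩ : Fin (l + q)) = p from
              Fin.ext (by show 0 + y = p.1; omega), Function.update_self]
            show V1 ⟨p.1, p.2⟩ = Fe f d0 y
            rw [hVval, if_neg (by omega), if_pos (by omega), hp, hyb]
          · rw [Function.update_of_ne (by
              intro hcc
              have := congrArg Fin.val hcc
              exact hyb (by simp only [Fin.val_mk] at this; omega))]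
            show U1 ⟨0 + y, hn⟩ = Fe f d0 y
            rw [finmk_eq _ (by omega : y < l + q) (by omega : 0 + y = y), hUval,
              if_neg hyb, if_pos hy]
        · apply hfr q
          refine occA f d0 _ q (by omega) ?_
          intro y hy hn
          by_cases hyb : y = b
          · rw [show (⟨q + y, hn⟩ : Fin (l + q)) = p from
              Fin.ext (by show q + y = p.1; omega), Function.update_self]
            show V1 ⟨p.1, p.2⟩ = Fe f d0 y
            rw [hVval, if_pos (by omega), hyb]
          · rw [Function.update_of_ne (by
              intro hcc
              have := congrArg Fin.val hcc
              exact hyb (by simp only [Fin.val_mk] at this; omega))]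
            show U1 ⟨q + y, hn⟩ = Fe f d0 y
            rw [hUval]
            by_cases hya : y = a
            · rw [if_pos (by omega), hya]
            · rw [if_neg (by omega)]
              by_cases hc1 : q + y < l
              · rw [if_pos hc1]
                by_contra hvne
                have hvne2 : Fe f d0 y ≠ Fe f d0 (y + q) := by
                  intro hcc
                  apply hvne
                  exact (congrArg (Fe f d0) (by omega : q + y = y + q)).trans hcc.symm
                rcases hothF y (by omega) hvne2 with h | h
                · exact hya h
                · exact hyb h
              · rw [if_neg hc1]
                exact congrArg (Fe f d0) (by omega)
    · -- V1 has an occurrence : impossible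
      exfalso
      unfold Free at hVfree
      push_neg at hVfree
      obtain ⟨j0, hocc⟩ := hVfree
      obtain ⟨hjl, heq⟩ := occB f d0 V1 j0 hocc
      have hj0q : j0 ≤ q := by omega
      have hj00 : j0 ≠ 0 := by
        intro hc
        have h := heq (b + q) (by omega) (by omega)
        rw [finmk_eq _ (by omega : b + q < l + q) (by omega : j0 + (b + q) = b + q),
          hVval, if_pos rfl] at h
        exact hFb h
      have hj0qe : j0 ≠ q := by
        intro hc
        have h := heq a (by omega) (by omega)
        rw [finmk_eq _ (by omega : a + q < l + q) (by omega : j0 + a = a + q),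
          hVval, if_neg (by omega), if_pos (by omega)] at h
        exact hFa h.symm
      have ci' : ∀ y, y + j0 < l → y ≠ b + q - j0 → Fe f d0 y = Fe f d0 (y + j0) := by
        intro y hy hne
        have h := heq y (by omega) (by omega)
        rw [hVval, if_neg (by omega), if_pos (by omega)] at h
        exact h.symm.trans (congrArg (Fe f d0) (by omega))
      have ciii' : ∀ y, l - q ≤ y → y < l - q + j0 →
          Fe f d0 y = Fe f d0 (y + (q - j0)) := by
        intro y hy1 hy2
        have h := heq (y + q - j0) (by omega) (by omega)
        rw [finmk_eq _ (by omega : y + q < l + q) (by omega : j0 + (y + q - j0) = y + q),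
          hVval, if_neg (by omega), if_neg (by omega)] at h
        exact (congrArg (Fe f d0) (by omega : y = y + q - q)).trans
          (h.trans (congrArg (Fe f d0) (by omega)))
      have hv1 : Fe f d0 b = Fe f d0 (b + j0) := ci' b (by omega) (by omega)
      by_cases hcx : l - q ≤ b + j0
      · have h2 := ciii' (b + j0) hcx (by omega)
        apply hFb
        exact hv1.trans (h2.trans (congrArg (Fe f d0) (by omega)))
      · push_neg at hcx
        have h4 : Fe f d0 (b + q) = Fe f d0 (b + q + j0) := ci' (b + q) (by omega) (by omega)
        have h5 : Fe f d0 (b + j0) ≠ Fe f d0 (b + j0 + q) := by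
          intro hcc
          apply hFb
          exact hv1.trans (hcc.trans
            ((congrArg (Fe f d0) (by omega : b + j0 + q = b + q + j0)).trans h4.symm))
        rcases hothF (b + j0) (by omega) h5 with h | h <;> omega
  · -- U1 has an occurrence : the hard structure, use the chain pair
    unfold Free at hUfree
    push_neg at hUfree
    obtain ⟨j0, hocc⟩ := hUfree
    obtain ⟨hjl, heq⟩ := occB f d0 U1 j0 hocc
    have hj0q : j0 ≤ q := by omega
    have hj00 : j0 ≠ 0 := by
      intro hc
      have h := heq (a + q) (by omega) (by omega)
      rw [finmk_eq _ (by omega : a + q < l + q) (by omega : j0 + (a + q) = a + q),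
        hUval, if_pos rfl] at h
      exact hFa h
    have hj0qe : j0 ≠ q := by
      intro hc
      have h := heq b (by omega) (by omega)
      rw [finmk_eq _ (by omega : b + q < l + q) (by omega : j0 + b = b + q),
        hUval, if_neg (by omega), if_pos (by omega)] at h
      exact hFb h.symm
    have ci : ∀ y, y + j0 < l → y ≠ a + q - j0 → Fe f d0 y = Fe f d0 (y + j0) := by
      intro y hy hne
      have h := heq y (by omega) (by omega)
      rw [hUval, if_neg (by omega), if_pos (by omega)] at h
      exact h.symm.trans (congrArg (Fe f d0) (by omega))
    have cii : Fe f d0 (a + q - j0) = Fe f d0 a := by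
      have h := heq (a + q - j0) (by omega) (by omega)
      rw [finmk_eq _ (by omega : a + q < l + q) (by omega : j0 + (a + q - j0) = a + q),
        hUval, if_pos rfl] at h
      exact h.symm
    have ciii : ∀ y, l - q ≤ y → y < l - q + j0 →
        Fe f d0 y = Fe f d0 (y + (q - j0)) := by
      intro y hy1 hy2
      have h := heq (y + q - j0) (by omega) (by omega)
      rw [finmk_eq _ (by omega : y + q < l + q) (by omega : j0 + (y + q - j0) = y + q),
        hUval, if_neg (by omega), if_neg (by omega)] at h
      exact (congrArg (Fe f d0) (by omega : y = y + q - q)).trans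
        (h.trans (congrArg (Fe f d0) (by omega)))
    obtain ⟨hba, hq2, hFab, haj, hl3⟩ := structure_of_cert l j0 q a b (Fe f d0)
      (by omega) (by omega) hab hbl hFa hFb hothF hmaxF ci cii ciii
    refine chain_works f d0 j0 b (by omega) (by omega) (by omega) (by omega) (by omega) ?_ ?_
    · intro y h1 h2
      exact ci y h1 (by omega)
    · intro hc
      apply hFa
      exact hFab.trans (hc.trans (congrArg (Fe f d0) (by omega)))

end Final


theorem stmt2 {A : Type*} [DecidableEq A] {l : ℕ} (f : Fin l → A) :
    ¬ HammingIsometric f ↔ hasKErrorBorder f 2 := by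
  constructor
  · intro hni
    by_contra hnb
    exact hni (isometric_of_no_border f hnb)
  · intro hb
    exact not_isometric_of_border f hb
end

section
/- If a word f over an alphabet A has no 2-error border, then f is Hamming-isometric: for every n and every pair of f-free words u, v of length n, there is an ordering of the positions where u and v differ such that changing them one at a time transforms u into v through f-free words only. -/
open Finset

lemma two_mismatch {B : Type*} [DecidableEq B] {m : ℕ} (P S : Fin m → B) (i1 i2 : Fin m)
    (h12 : i1 ≠ i2) (h1 : P i1 ≠ S i1) (h2 : P i2 ≠ S i2)
    (hrest : ∀ i, i ≠ i1 → i ≠ i2 → P i = S i) : hammingDist P S = 2 := by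
  classical
  have hset : ({i | P i ≠ S i} : Finset (Fin m)) = {i1, i2} := by
    ext i
    simp only [Finset.mem_filter, Finset.mem_univ, true_and, Finset.mem_insert,
      Finset.mem_singleton]
    constructor
    · intro h
      by_contra hc
      push_neg at hc
      exact h (hrest i hc.1 hc.2)
    · rintro (rfl | rfl) <;> assumption
  rw [hammingDist, hset]
  exact Finset.card_pair h12

lemma key_lemma {A : Type*} [DecidableEq A] {l n : ℕ} (f : Fin l → A)
    (hf : ¬ hasKErrorBorder f 2) (u v : Fin n → A) (hu : Free f u) (hv : Free f v)
    (hne : u ≠ v) :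
    ∃ p : Fin n, u p ≠ v p ∧ Free f (Function.update u p (v p)) := by
  classical
  by_contra hcon
  push_neg at hcon
  have hocc : ∀ p : Fin n, ∃ jp : ℕ, u p ≠ v p → occursAt f (Function.update u p (v p)) jp := by
    intro p
    by_cases hp : u p ≠ v p
    · have h2 : ∃ j, occursAt f (Function.update u p (v p)) j := by
        by_contra h3
        exact (hcon p hp) (fun j hj => h3 ⟨j, hj⟩)
      exact h2.imp fun j hj _ => hj
    · exact ⟨0, fun h => absurd h hp⟩
  choose J hJ using hocc
  -- window facts
  have hwin : ∀ p : Fin n, u p ≠ v p →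
      (J p + l ≤ n) ∧ (J p ≤ p.1 ∧ p.1 < J p + l) ∧
      (∀ t : Fin l, ∀ hx : J p + t.1 < n, J p + t.1 ≠ p.1 → f t = u ⟨J p + t.1, hx⟩) ∧
      (∀ t : Fin l, J p + t.1 = p.1 → f t = v p) := by
    intro p hp
    obtain ⟨hle, hof⟩ := hJ p hp
    have hmem : J p ≤ p.1 ∧ p.1 < J p + l := by
      by_contra hout
      refine hu (J p) ⟨hle, fun i => ?_⟩
      have hxp : (⟨J p + i.1, by have := i.isLt; omega⟩ : Fin n) ≠ p := by
        intro h
        have hv1 : J p + i.1 = p.1 := congrArg Fin.val h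
        have := i.isLt
        exact hout ⟨by omega, by omega⟩
      rw [← hof i]
      exact (Function.update_of_ne hxp (v p) u).symm
    refine ⟨hle, hmem, ?_, ?_⟩
    · intro t hx hne'
      have hxp : (⟨J p + t.1, hx⟩ : Fin n) ≠ p := fun h => hne' (congrArg Fin.val h)
      rw [← hof t]
      exact Function.update_of_ne hxp (v p) u
    · intro t ht
      have hxp : (⟨J p + t.1, by have := t.isLt; omega⟩ : Fin n) = p := Fin.ext ht
      rw [← hof t, hxp, Function.update_self]
  -- (A) injectivity of window starts
  have hinj : ∀ a b : Fin n, u a ≠ v a → u b ≠ v b → a ≠ b → J a ≠ J b := by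
    intro a b ha hb hab heq
    obtain ⟨hleA, hmemA, h3A, h4A⟩ := hwin a ha
    obtain ⟨hleB, hmemB, h3B, h4B⟩ := hwin b hb
    have hblt : b.1 - J a < l := by omega
    have h1 : f ⟨b.1 - J a, hblt⟩ = u b := by
      have h := h3A ⟨b.1 - J a, hblt⟩ (show J a + (b.1 - J a) < n by omega)
        (show J a + (b.1 - J a) ≠ a.1 by
          have : a.1 ≠ b.1 := fun hh => hab (Fin.ext hh)
          omega)
      rw [h]
      congr 1
      exact Fin.ext (show J a + (b.1 - J a) = b.1 by omega)
    have h2 : f ⟨b.1 - J a, hblt⟩ = v b :=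
      h4B ⟨b.1 - J a, hblt⟩ (show J b + (b.1 - J a) = b.1 by omega)
    exact hb (h1 ▸ h2 ▸ rfl)
  -- (B) every window contains a second error
  have hB : ∀ a : Fin n, u a ≠ v a →
      ∃ b : Fin n, u b ≠ v b ∧ b ≠ a ∧ J a ≤ b.1 ∧ b.1 < J a + l := by
    intro a ha
    by_contra hno
    push_neg at hno
    obtain ⟨hleA, hmemA, h3A, h4A⟩ := hwin a ha
    refine hv (J a) ⟨hleA, fun i => ?_⟩
    by_cases hia : J a + i.1 = a.1
    · have hxa : (⟨J a + i.1, by have := i.isLt; omega⟩ : Fin n) = a := Fin.ext hia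
      rw [hxa, ← h4A i hia]
    · have h1 : f i = u ⟨J a + i.1, by have := i.isLt; omega⟩ :=
        h3A i (by have := i.isLt; omega) hia
      have h2 : u ⟨J a + i.1, by have := i.isLt; omega⟩
          = v ⟨J a + i.1, by have := i.isLt; omega⟩ := by
        by_contra hne2
        have hxa : (⟨J a + i.1, by have := i.isLt; omega⟩ : Fin n) ≠ a :=
          fun h => hia (congrArg Fin.val h)
        have hle' : J a ≤ J a + i.1 := Nat.le_add_right _ _
        have := hno ⟨J a + i.1, by have := i.isLt; omega⟩ hne2 hxa hle'
        have hi := i.isLt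
        simp only at this
        omega
      rw [← h2, h1]
  -- (C0) no mutual window containment (ordered version)
  have hC0 : ∀ a b : Fin n, u a ≠ v a → u b ≠ v b → a ≠ b →
      (J a ≤ b.1 ∧ b.1 < J a + l) → (J b ≤ a.1 ∧ a.1 < J b + l) → J b < J a → False := by
    intro a b ha hb hab hbWa haWb hlt
    obtain ⟨hleA, hmemA, h3A, h4A⟩ := hwin a ha
    obtain ⟨hleB, hmemB, h3B, h4B⟩ := hwin b hb
    have hab' : a.1 ≠ b.1 := fun h => hab (Fin.ext h)
    apply hf
    refine ⟨J b + l - J a, by omega, by omega, ?_⟩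
    have hm1 : a.1 - J a < J b + l - J a := by omega
    have hm2 : b.1 - J a < J b + l - J a := by omega
    refine two_mismatch _ _ ⟨a.1 - J a, hm1⟩ ⟨b.1 - J a, hm2⟩ ?_ ?_ ?_ ?_
    · intro h
      simp only [Fin.mk.injEq] at h
      omega
    · show f ⟨a.1 - J a, by omega⟩ ≠ f ⟨l - (J b + l - J a) + (a.1 - J a), by omega⟩
      have eL : f ⟨a.1 - J a, show a.1 - J a < l by omega⟩ = v a :=
        h4A ⟨a.1 - J a, by omega⟩ (show J a + (a.1 - J a) = a.1 by omega)
      have eR : f ⟨l - (J b + l - J a) + (a.1 - J a), show _ < l by omega⟩ = u a := by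
        have h := h3B ⟨l - (J b + l - J a) + (a.1 - J a), by omega⟩
          (show J b + (l - (J b + l - J a) + (a.1 - J a)) < n by omega)
          (show J b + (l - (J b + l - J a) + (a.1 - J a)) ≠ b.1 by omega)
        rw [h]
        congr 1
        exact Fin.ext (show J b + (l - (J b + l - J a) + (a.1 - J a)) = a.1 by omega)
      rw [eL, eR]
      exact fun hh => ha hh.symm
    · show f ⟨b.1 - J a, by omega⟩ ≠ f ⟨l - (J b + l - J a) + (b.1 - J a), by omega⟩
      have eL : f ⟨b.1 - J a, show b.1 - J a < l by omega⟩ = u b := by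
        have h := h3A ⟨b.1 - J a, by omega⟩ (show J a + (b.1 - J a) < n by omega)
          (show J a + (b.1 - J a) ≠ a.1 by omega)
        rw [h]
        congr 1
        exact Fin.ext (show J a + (b.1 - J a) = b.1 by omega)
      have eR : f ⟨l - (J b + l - J a) + (b.1 - J a), show _ < l by omega⟩ = v b :=
        h4B ⟨l - (J b + l - J a) + (b.1 - J a), by omega⟩
          (show J b + (l - (J b + l - J a) + (b.1 - J a)) = b.1 by omega)
      rw [eL, eR]
      exact hb
    · intro i hi1 hi2
      show f ⟨i.1, by have := i.isLt; omega⟩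
          = f ⟨l - (J b + l - J a) + i.1, by have := i.isLt; omega⟩
      have hia : J a + i.1 ≠ a.1 := by
        intro h
        exact hi1 (Fin.ext (show i.1 = a.1 - J a by omega))
      have hib : J a + i.1 ≠ b.1 := by
        intro h
        exact hi2 (Fin.ext (show i.1 = b.1 - J a by omega))
      have hi := i.isLt
      have eL : f ⟨i.1, show i.1 < l by omega⟩ = u ⟨J a + i.1, show J a + i.1 < n by omega⟩ :=
        h3A ⟨i.1, by omega⟩ (by omega) hia
      have eR : f ⟨l - (J b + l - J a) + i.1, show _ < l by omega⟩
          = u ⟨J a + i.1, show J a + i.1 < n by omega⟩ := by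
        have h := h3B ⟨l - (J b + l - J a) + i.1, by omega⟩
          (show J b + (l - (J b + l - J a) + i.1) < n by omega)
          (show J b + (l - (J b + l - J a) + i.1) ≠ b.1 by omega)
        rw [h]
        congr 1
        exact Fin.ext (show J b + (l - (J b + l - J a) + i.1) = J a + i.1 by omega)
      rw [eL, eR]
  -- (C) symmetrized
  have hC : ∀ a b : Fin n, u a ≠ v a → u b ≠ v b → a ≠ b →
      (J a ≤ b.1 ∧ b.1 < J a + l) → (J b ≤ a.1 ∧ a.1 < J b + l) → False := by
    intro a b ha hb hab hbWa haWb
    rcases Nat.lt_trichotomy (J b) (J a) with h | h | h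
    · exact hC0 a b ha hb hab hbWa haWb h
    · exact hinj a b ha hb hab h.symm
    · exact hC0 b a hb ha (fun hh => hab hh.symm) haWb hbWa h
  -- descent on window starts
  have descent : ∀ k : ℕ, ∀ a e : Fin n, u a ≠ v a → u e ≠ v e → e ≠ a →
      J a ≤ e.1 → e.1 < J a + l → J e < J a → J e = k → False := by
    intro k
    induction k using Nat.strong_induction_on with
    | _ k IH =>
      intro a e ha he hea h1 h2 hJlt hJk
      obtain ⟨hleA, hmemA, -, -⟩ := hwin a ha
      obtain ⟨hleE, hmemE, -, -⟩ := hwin e he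
      have houtA : ¬ (J e ≤ a.1 ∧ a.1 < J e + l) := fun hin =>
        hC a e ha he (fun h => hea h.symm) ⟨h1, h2⟩ hin
      have haJe : J e + l ≤ a.1 := by omega
      obtain ⟨e', he', hee', hw1, hw2⟩ := hB e he
      obtain ⟨hleE', hmemE', -, -⟩ := hwin e' he'
      rcases Nat.lt_trichotomy (J e') (J e) with hlt | heq | hgt
      · exact IH (J e') (by omega) e e' he he' hee' hw1 hw2 hlt rfl
      · exact hinj e' e he' he hee' heq
      · have houtE : ¬ (J e' ≤ e.1 ∧ e.1 < J e' + l) := fun hin =>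
          hC e e' he he' (fun h => hee' h.symm) ⟨hw1, hw2⟩ hin
        have he'a : e' ≠ a := fun h => by
          have : e'.1 = a.1 := congrArg Fin.val h
          omega
        have houtA' : ¬ (J e' ≤ a.1 ∧ a.1 < J e' + l) := fun hin =>
          hC a e' ha he' (fun h => he'a h.symm) ⟨by omega, by omega⟩ hin
        omega
  -- conclusion
  obtain ⟨p0, hp0⟩ : ∃ p, u p ≠ v p := Function.ne_iff.mp hne
  have hSne : (({p | u p ≠ v p} : Finset (Fin n))).Nonempty := ⟨p0, by simp [hp0]⟩
  obtain ⟨a, haS, hamax⟩ := Finset.exists_max_image ({p | u p ≠ v p} : Finset (Fin n)) J hSne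
  have ha : u a ≠ v a := by simpa using haS
  obtain ⟨e, he, hea, h1, h2⟩ := hB a ha
  have hJe : J e < J a :=
    lt_of_le_of_ne (hamax e (by simp [he])) (hinj e a he ha hea)
  exact descent (J e) a e ha he hea h1 h2 hJe rfl

lemma dist_update {A : Type*} [DecidableEq A] {n : ℕ} (u v : Fin n → A) (p : Fin n)
    (hp : u p ≠ v p) :
    hammingDist u v = hammingDist (Function.update u p (v p)) v + 1 := by
  classical
  rw [hammingDist, hammingDist]
  have h1 : ({i | Function.update u p (v p) i ≠ v i} : Finset (Fin n)) =
      ({i | u i ≠ v i} : Finset (Fin n)).erase p := by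
    ext i
    simp only [Finset.mem_filter, Finset.mem_univ, true_and, Finset.mem_erase]
    constructor
    · intro h
      have hip : i ≠ p := by
        rintro rfl
        exact h (by simp)
      rw [Function.update_of_ne hip] at h
      exact ⟨hip, h⟩
    · rintro ⟨hip, h⟩
      rw [Function.update_of_ne hip]
      exact h
  rw [h1, Finset.card_erase_of_mem (by simp [hp])]
  have hpos : 0 < #({i | u i ≠ v i} : Finset (Fin n)) :=
    Finset.card_pos.2 ⟨p, by simp [hp]⟩
  omega

lemma transform_refl {A : Type*} [DecidableEq A] {l n : ℕ} (f : Fin l → A)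
    (u : Fin n → A) (hu : Free f u) : FreeTransform f u u := by
  refine ⟨fun _ => u, rfl, rfl, fun _ => hu, fun j => ?_⟩
  have h1 := j.isLt
  have h0 : hammingDist u u = 0 := hammingDist_self u
  exact absurd h1 (by omega)

def chainW {A : Type*} {n D' : ℕ} (u : Fin n → A) (w' : Fin (D' + 1) → Fin n → A)
    (t : ℕ) : Fin n → A :=
  if t = 0 then u else w' ⟨min (t - 1) D', by omega⟩

lemma chainW_zero {A : Type*} {n D' : ℕ} (u : Fin n → A) (w' : Fin (D' + 1) → Fin n → A) :
    chainW u w' 0 = u := rfl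

lemma chainW_succ {A : Type*} {n D' : ℕ} (u : Fin n → A) (w' : Fin (D' + 1) → Fin n → A)
    (t : ℕ) : chainW u w' (t + 1) = w' ⟨min t D', by omega⟩ := by
  simp [chainW]

lemma transform_aux {A : Type*} [DecidableEq A] {l : ℕ} (f : Fin l → A)
    (hf : ¬ hasKErrorBorder f 2) :
    ∀ (d n : ℕ) (u v : Fin n → A), hammingDist u v ≤ d → Free f u → Free f v →
      FreeTransform f u v := by
  intro d
  induction d with
  | zero =>
    intro n u v hd hu hv
    have : u = v := hammingDist_eq_zero.1 (Nat.le_zero.1 hd)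
    subst this
    exact transform_refl f u hu
  | succ d IH =>
    intro n u v hd hu hv
    by_cases huv : u = v
    · subst huv
      exact transform_refl f u hu
    · obtain ⟨p, hp, hfree'⟩ := key_lemma f hf u v hu hv huv
      have hD : hammingDist u v = hammingDist (Function.update u p (v p)) v + 1 :=
        dist_update u v p hp
      obtain ⟨w', h0', hl', hfr', hs'⟩ :=
        IH n (Function.update u p (v p)) v (by omega) hfree' hv
      refine ⟨fun i => chainW u w' i.1, ?_, ?_, ?_, ?_⟩
      · show chainW u w' ((0 : Fin (hammingDist u v + 1))).1 = u
        rw [Fin.val_zero, chainW_zero]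
      · show chainW u w' (Fin.last (hammingDist u v)).1 = v
        rw [Fin.val_last, hD, chainW_succ]
        have he : (⟨min (hammingDist (Function.update u p (v p)) v)
            (hammingDist (Function.update u p (v p)) v), by omega⟩ :
            Fin (hammingDist (Function.update u p (v p)) v + 1))
            = Fin.last (hammingDist (Function.update u p (v p)) v) := by
          apply Fin.ext
          simp [Fin.val_last]
        rw [he, hl']
      · intro i
        show Free f (chainW u w' i.1)
        rcases Nat.eq_zero_or_pos i.1 with h | h
        · rw [h, chainW_zero]; exact hu
        · rw [show i.1 = (i.1 - 1) + 1 by omega, chainW_succ]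
          exact hfr' _
      · intro j
        by_cases h : j.1 = 0
        · refine ⟨p, ?_, ?_⟩
          · show chainW u w' (j.castSucc).1 p ≠ v p
            rw [Fin.coe_castSucc, h, chainW_zero]
            exact hp
          · show chainW u w' (j.succ).1 = Function.update (chainW u w' (j.castSucc).1) p (v p)
            rw [Fin.val_succ, Fin.coe_castSucc, h, chainW_zero, chainW_succ]
            have he : (⟨min 0 (hammingDist (Function.update u p (v p)) v), by omega⟩ :
                Fin (hammingDist (Function.update u p (v p)) v + 1)) = 0 := by
              apply Fin.ext
              simp
            rw [he, h0']
        · have ht : j.1 - 1 < hammingDist (Function.update u p (v p)) v := by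
            have := j.isLt; omega
          obtain ⟨q, hq1, hq2⟩ := hs' ⟨j.1 - 1, ht⟩
          have a1 : (j.castSucc).1 = (j.1 - 1) + 1 := by
            rw [Fin.coe_castSucc]; omega
          have a2 : (j.succ).1 = ((j.1 - 1) + 1) + 1 := by
            rw [Fin.val_succ]; omega
          have e1 : chainW u w' (j.castSucc).1
              = w' ((⟨j.1 - 1, ht⟩ : Fin (hammingDist (Function.update u p (v p)) v)).castSucc) := by
            rw [a1, chainW_succ]
            refine congrArg w' (Fin.ext ?_)
            simp only [Fin.coe_castSucc]
            omega
          have e2 : chainW u w' (j.succ).1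
              = w' ((⟨j.1 - 1, ht⟩ : Fin (hammingDist (Function.update u p (v p)) v)).succ) := by
            rw [a2, chainW_succ]
            refine congrArg w' (Fin.ext ?_)
            simp only [Fin.val_succ]
            omega
          refine ⟨q, ?_, ?_⟩
          · show chainW u w' (j.castSucc).1 q ≠ v q
            rw [e1]
            exact hq1
          · show chainW u w' (j.succ).1 = Function.update (chainW u w' (j.castSucc).1) q (v q)
            rw [e1, e2]
            exact hq2

theorem stmt4 {A : Type*} [DecidableEq A] {l : ℕ} (f : Fin l → A)
    (hf : ¬ hasKErrorBorder f 2) : HammingIsometric f := by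
  intro n u v hu hv
  exact transform_aux f hf (hammingDist u v) n u v le_rfl hu hv
end

section
/- The word 1010011 over the binary alphabet is not Hamming-isometric. -/
open Finset

def wu : Fin 10 → Fin 2 := ![1,0,1,0,0,1,0,0,1,1]
def wv : Fin 10 → Fin 2 := ![1,0,1,1,0,1,1,0,1,1]

instance occursAt.dec {A : Type*} [DecidableEq A] {l n : ℕ} (f : Fin l → A)
    (u : Fin n → A) (j : ℕ) : Decidable (occursAt f u j) :=
  if h : j + l ≤ n then
    if h2 : ∀ i : Fin l, u ⟨j + i.1, by have := i.isLt; omega⟩ = f i then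
      isTrue ⟨h, h2⟩
    else isFalse (fun ⟨_, hh⟩ => h2 hh)
  else isFalse (fun ⟨hh, _⟩ => h hh)

lemma free_of {A : Type*} [DecidableEq A] {l n : ℕ} (f : Fin l → A) (u : Fin n → A)
    (hl : 0 < l) (h : ∀ j : Fin n, ¬ occursAt f u j.1) : Free f u := by
  intro j hj
  have hn : j < n := by rcases hj with ⟨hle, -⟩; omega
  exact h ⟨j, hn⟩ hj

lemma free_u : Free (![1,0,1,0,0,1,1] : Fin 7 → Fin 2) wu :=
  free_of _ _ (by norm_num) (by decide)

lemma free_v : Free (![1,0,1,0,0,1,1] : Fin 7 → Fin 2) wv :=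
  free_of _ _ (by norm_num) (by decide)

lemma hd_uv : hammingDist wu wv = 2 := by decide

theorem stmt6 : ¬ HammingIsometric (![1,0,1,0,0,1,1] : Fin 7 → Fin 2) := by
  intro h
  obtain ⟨w, hw0, hwlast, hfree, hstep⟩ := h 10 wu wv free_u free_v
  have hd := hd_uv
  obtain ⟨p, hp, hp2⟩ := hstep ⟨0, by omega⟩
  have hw0' : w (Fin.castSucc ⟨0, by omega⟩) = wu := hw0
  rw [hw0'] at hp hp2
  have hp36 : p = 3 ∨ p = 6 := by
    fin_cases p <;>
      first
      | exact Or.inl (by decide)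
      | exact Or.inr (by decide)
      | exact absurd (by decide) hp
  have hnotfree := hfree (Fin.succ ⟨0, by omega⟩)
  rw [hp2] at hnotfree
  rcases hp36 with rfl | rfl
  · exact hnotfree 3 ⟨by norm_num, by decide⟩
  · exact hnotfree 0 ⟨by norm_num, by decide⟩
end

section
/- The word 0301 over Z_4 is not Lee-isometric: there exists n and two vertices u, v of Q_n^4(0301) such that the distance between u and v in Q_n^4(0301) is strictly greater than their distance in Q_n^4. (Witness: n = 6, u = 030001, v = 030201.) -/
open Finset

section Aux

private abbrev ff : Fin 4 → ZMod 4 := ![0,3,0,1]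
private abbrev uu : Fin 6 → ZMod 4 := ![0,3,0,0,0,1]
private abbrev vv : Fin 6 → ZMod 4 := ![0,3,0,2,0,1]

private lemma free6 (w : Fin 6 → ZMod 4)
    (h0 : ¬ ∀ i : Fin 4, w ⟨0 + i.1, by have := i.isLt; omega⟩ = ff i)
    (h1 : ¬ ∀ i : Fin 4, w ⟨1 + i.1, by have := i.isLt; omega⟩ = ff i)
    (h2 : ¬ ∀ i : Fin 4, w ⟨2 + i.1, by have := i.isLt; omega⟩ = ff i) :
    Free ff w := by
  rintro j ⟨h, hi⟩
  have hj : j ≤ 2 := by omega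
  interval_cases j
  · exact h0 hi
  · exact h1 hi
  · exact h2 hi

private lemma freeU : Free ff uu := free6 _ (by decide) (by decide) (by decide)
private lemma freeV : Free ff vv := free6 _ (by decide) (by decide) (by decide)
private lemma freeW1 : Free ff ![0,3,1,0,0,1] := free6 _ (by decide) (by decide) (by decide)
private lemma freeW2 : Free ff ![0,3,1,1,0,1] := free6 _ (by decide) (by decide) (by decide)
private lemma freeW3 : Free ff ![0,3,1,2,0,1] := free6 _ (by decide) (by decide) (by decide)

private lemma notFree1 : ¬ Free ff ![0,3,0,1,0,1] :=
  fun hF => hF 0 ⟨by omega, by decide⟩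

private lemma notFree3 : ¬ Free ff ![0,3,0,3,0,1] :=
  fun hF => hF 2 ⟨by omega, by decide⟩

private lemma qadj (a b : Fin 6 → ZMod 4)
    (h : ∃ i : Fin 6, a i ≠ b i ∧ (b i = a i + 1 ∨ b i = a i - 1) ∧ ∀ j, j ≠ i → a j = b j) :
    (QGraph 6 4).Adj a b := h

private lemma qadj' (a b : Fin 6 → ZMod 4) (h : (QGraph 6 4).Adj a b) :
    ∃ i : Fin 6, a i ≠ b i ∧ (b i = a i + 1 ∨ b i = a i - 1) ∧ ∀ j, j ≠ i → a j = b j := h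

/-- Any common neighbour of `uu` and `vv` in `QGraph 6 4` is `030101` or `030301`. -/
private lemma middle (a : Fin 6 → ZMod 4) (h1 : (QGraph 6 4).Adj uu a)
    (h2 : (QGraph 6 4).Adj a vv) :
    a = ![0,3,0,1,0,1] ∨ a = ![0,3,0,3,0,1] := by
  obtain ⟨i, hne_i, hpm_i, hrest_i⟩ := qadj' _ _ h1
  obtain ⟨k, hne_k, hpm_k, hrest_k⟩ := qadj' _ _ h2
  have hi3 : i = (3 : Fin 6) := by
    by_contra hi
    have ha3 : uu 3 = a 3 := hrest_i 3 (fun e => hi e.symm)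
    have hk3 : k = (3 : Fin 6) := by
      by_contra hk
      have : a 3 = vv 3 := hrest_k 3 (fun e => hk e.symm)
      rw [← ha3] at this
      exact absurd this (by decide)
    subst hk3
    have hv : a i = vv i := hrest_k i hi
    have huv : uu i = vv i := by
      revert hi; fin_cases i <;> intro hi <;> first | decide | exact absurd rfl hi
    exact hne_i (huv.trans hv.symm)
  subst hi3
  have hk3 : k = (3 : Fin 6) := by
    by_contra hk
    have h1 : uu k = a k := hrest_i k hk
    have huv : uu k = vv k := by
      revert hk; fin_cases k <;> intro hk <;> first | decide | exact absurd rfl hk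
    exact hne_k (h1.symm.trans huv)
  subst hk3
  have h3 : a 3 = 1 ∨ a 3 = 3 := by
    rcases hpm_i with h | h
    · left; rw [h]; decide
    · right; rw [h]; decide
  have ha : ∀ c : ZMod 4, a 3 = c → a = ![0,3,0,c,0,1] := by
    intro c hc
    funext j
    fin_cases j
    · exact (hrest_i 0 (by decide)).symm.trans rfl
    · exact (hrest_i 1 (by decide)).symm.trans rfl
    · exact (hrest_i 2 (by decide)).symm.trans rfl
    · exact hc
    · exact (hrest_i 4 (by decide)).symm.trans rfl
    · exact (hrest_i 5 (by decide)).symm.trans rfl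
  rcases h3 with h | h
  · exact Or.inl (ha 1 h)
  · exact Or.inr (ha 3 h)

private lemma induceAdjIff (S : Set (Fin 6 → ZMod 4)) (a b : S) :
    ((QGraph 6 4).induce S).Adj a b ↔ (QGraph 6 4).Adj a.1 b.1 := by
  simp [SimpleGraph.comap_adj]

end Aux

theorem stmt13 :
    ¬ LeeIsometric (![0,3,0,1] : Fin 4 → ZMod 4) ∧
    ∃ (hu : Free (![0,3,0,1] : Fin 4 → ZMod 4) (![0,3,0,0,0,1] : Fin 6 → ZMod 4))
      (hv : Free (![0,3,0,1] : Fin 4 → ZMod 4) (![0,3,0,2,0,1] : Fin 6 → ZMod 4)),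
      (QGraph 6 4).dist ![0,3,0,0,0,1] ![0,3,0,2,0,1] <
        ((QGraph 6 4).induce {w | Free (![0,3,0,1] : Fin 4 → ZMod 4) w}).dist
          ⟨![0,3,0,0,0,1], hu⟩ ⟨![0,3,0,2,0,1], hv⟩ := by
  classical
  have hu : Free ff uu := freeU
  have hv : Free ff vv := freeV
  set G := QGraph 6 4 with hG
  set S : Set (Fin 6 → ZMod 4) := {w | Free ff w} with hS
  set H := G.induce S with hH
  -- adjacency facts
  have a1 : G.Adj uu ![0,3,1,0,0,1] := qadj _ _ ⟨2, by decide, by decide, by decide⟩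
  have a2 : G.Adj ![0,3,1,0,0,1] ![0,3,1,1,0,1] := qadj _ _ ⟨3, by decide, by decide, by decide⟩
  have a3 : G.Adj ![0,3,1,1,0,1] ![0,3,1,2,0,1] := qadj _ _ ⟨3, by decide, by decide, by decide⟩
  have a4 : G.Adj ![0,3,1,2,0,1] vv := qadj _ _ ⟨2, by decide, by decide, by decide⟩
  have b1 : G.Adj uu ![0,3,0,1,0,1] := qadj _ _ ⟨3, by decide, by decide, by decide⟩
  have b2 : G.Adj ![0,3,0,1,0,1] vv := qadj _ _ ⟨3, by decide, by decide, by decide⟩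
  -- Q-distance ≤ 2
  have hQ : G.dist uu vv ≤ 2 := by
    have h := SimpleGraph.dist_le (SimpleGraph.Walk.cons b1 (SimpleGraph.Walk.cons b2 SimpleGraph.Walk.nil))
    simpa using h
  -- walk in the induced graph
  have W : H.Walk ⟨uu, hu⟩ ⟨vv, hv⟩ :=
    .cons ((induceAdjIff S ⟨uu, hu⟩ ⟨_, freeW1⟩).mpr a1)
      (.cons ((induceAdjIff S ⟨_, freeW1⟩ ⟨_, freeW2⟩).mpr a2)
        (.cons ((induceAdjIff S ⟨_, freeW2⟩ ⟨_, freeW3⟩).mpr a3)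
          (.cons ((induceAdjIff S ⟨_, freeW3⟩ ⟨vv, hv⟩).mpr a4) .nil)))
  have hreach : H.Reachable ⟨uu, hu⟩ ⟨vv, hv⟩ := ⟨W⟩
  have hneq : (⟨uu, hu⟩ : S) ≠ ⟨vv, hv⟩ := by
    intro h
    have h3 : uu 3 = vv 3 := congrFun (congrArg Subtype.val h) 3
    exact absurd h3 (by decide)
  have hbig : 2 < H.dist ⟨uu, hu⟩ ⟨vv, hv⟩ := by
    by_contra hle
    push_neg at hle
    obtain ⟨p, hp⟩ := hreach.exists_walk_length_eq_dist
    have hl : p.length = 0 ∨ p.length = 1 ∨ p.length = 2 := by omega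
    rcases hl with h0 | h1 | h2
    · exact hneq (SimpleGraph.Walk.eq_of_length_eq_zero h0)
    · have hadj := p.adj_of_length_eq_one h1
      have hGadj : G.Adj uu vv := (induceAdjIff S _ _).mp hadj
      exact (by decide : ¬ ∃ i : Fin 6, uu i ≠ vv i ∧
          (vv i = uu i + 1 ∨ vv i = uu i - 1) ∧ ∀ j, j ≠ i → uu j = vv j) (qadj' _ _ hGadj)
    · have g01 : H.Adj (p.getVert 0) (p.getVert 1) := p.adj_getVert_succ (by omega)
      have g12 : H.Adj (p.getVert 1) (p.getVert 2) := p.adj_getVert_succ (by omega)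
      rw [p.getVert_zero] at g01
      have gv : p.getVert 2 = ⟨vv, hv⟩ := by rw [← h2]; exact p.getVert_length
      rw [gv] at g12
      have hb1 : G.Adj uu (p.getVert 1).1 := (induceAdjIff S _ _).mp g01
      have hb2 : G.Adj (p.getVert 1).1 vv := (induceAdjIff S _ _).mp g12
      have hbS : Free ff (p.getVert 1).1 := (p.getVert 1).2
      rcases middle _ hb1 hb2 with hb | hb
      · rw [hb] at hbS; exact notFree1 hbS
      · rw [hb] at hbS; exact notFree3 hbS
  have final : G.dist uu vv < H.dist ⟨uu, hu⟩ ⟨vv, hv⟩ := lt_of_le_of_lt hQ hbig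
  refine ⟨?_, hu, hv, final⟩
  intro hiso
  have e := hiso 6 uu vv hu hv
  rw [e] at final
  exact lt_irrefl _ final
end
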